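/- arXiv:1302.2774 — 2 statements merged into one kernel-verified Lean document; each statement's English description precedes it below -/
import Mathlib

section
/- Let E be a closed symmetric monoidal category, (T, μ, η) a monad on E, and σ a tensorial strength for the functor T with corresponding E-enrichment φ. Then (T, μ, η, σ) is a strong monad, i.e. σ additionally satisfies σ_{X,Y} ∘ (id_X ⊗ η_Y) = η_{X⊗Y} and σ_{X,Y} ∘ (id_X ⊗ μ_Y) = μ_{X⊗Y} ∘ T(σ_{X,Y}) ∘ σ_{X,T(Y)}, if and only if η and μ are E-natural transformations with respect to φ (and the induced composite enrichment of T∘T). Consequently, extensions of the monad (T, μ, η) to a strong monad correspond bijectively to extensions to an E-enriched monad. -/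
open CategoryTheory MonoidalCategory MonoidalClosed Limits

universe v u

namespace PaperMorita

variable {C : Type u} [Category.{v} C] [MonoidalCategory C] [SymmetricCategory C]
  [MonoidalClosed C]

/-- The transpose of `f : X ⊗ A ⟶ B` under the adjunction `- ⊗ A ⊣ [A,-]`
(obtained from Mathlib's `tensorLeft` adjunction via the symmetry). -/
noncomputable def rcurry {X A B : C} (f : X ⊗ A ⟶ B) : X ⟶ (ihom A).obj B :=
  MonoidalClosed.curry ((β_ A X).hom ≫ f)

/-- The inverse transpose of `g : X ⟶ [A,B]`, a morphism `X ⊗ A ⟶ B`. -/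
noncomputable def runcurry {X A B : C} (g : X ⟶ (ihom A).obj B) : X ⊗ A ⟶ B :=
  (β_ X A).hom ≫ MonoidalClosed.uncurry g

/-- The evaluation morphism `ev_A : [A,B] ⊗ A ⟶ B`. -/
noncomputable def ev (A B : C) : (((ihom A).obj B) ⊗ A) ⟶ B :=
  (β_ _ _).hom ≫ (ihom.ev A).app B

/-- The coevaluation morphism `γ_A : X ⟶ [A, X ⊗ A]`, adjoint to the identity of `X ⊗ A`. -/
noncomputable def coev (A X : C) : X ⟶ (ihom A).obj (X ⊗ A) :=
  rcurry (𝟙 (X ⊗ A))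

/-- The unit morphism `j_A : I ⟶ [A,A]`. -/
noncomputable def junit (A : C) : 𝟙_ C ⟶ (ihom A).obj A :=
  rcurry (λ_ A).hom

/-- The internal composition morphism `c : [B,D] ⊗ [A,B] ⟶ [A,D]`, characterized by
`ev ∘ (c ⊗ id) = ev ∘ (id ⊗ ev)`. -/
noncomputable def icomp (A B D : C) : (((ihom B).obj D) ⊗ ((ihom A).obj B)) ⟶ ((ihom A).obj D) :=
  rcurry ((α_ _ _ _).hom ≫ (_ ◁ ev A B) ≫ ev B D)

/-- A tensorial strength for an endofunctor `T`, in the sense of Kock: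
a natural family `σ_{X,Y} : X ⊗ T(Y) ⟶ T(X ⊗ Y)` satisfying the unit and
associativity axioms. -/
structure Strength (T : C ⥤ C) where
  σ : ∀ X Y : C, X ⊗ T.obj Y ⟶ T.obj (X ⊗ Y)
  naturality_left : ∀ {X X' : C} (f : X ⟶ X') (Y : C),
    (f ▷ T.obj Y) ≫ σ X' Y = σ X Y ≫ T.map (f ▷ Y)
  naturality_right : ∀ (X : C) {Y Y' : C} (f : Y ⟶ Y'),
    (X ◁ T.map f) ≫ σ X Y' = σ X Y ≫ T.map (X ◁ f)
  unit : ∀ Y : C, σ (𝟙_ C) Y ≫ T.map (λ_ Y).hom = (λ_ (T.obj Y)).hom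
  assoc : ∀ X Y Z : C,
    (α_ X Y (T.obj Z)).hom ≫ (X ◁ σ Y Z) ≫ σ X (Y ⊗ Z)
      = σ (X ⊗ Y) Z ≫ T.map (α_ X Y Z).hom

/-- An `E`-enrichment of an endofunctor `T` of the closed symmetric monoidal category `E`:
a natural family `φ_{A,B} : [A,B] ⟶ [T(A),T(B)]` satisfying the unit and composition
axioms and inducing the action of `T` on morphisms under `E(A,B) ≅ E(I,[A,B])`. -/
structure Enrichment (T : C ⥤ C) where
  φ : ∀ A B : C, ((ihom A).obj B) ⟶ ((ihom (T.obj A)).obj (T.obj B))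
  naturality_right : ∀ (A : C) {B B' : C} (g : B ⟶ B'),
    φ A B ≫ (ihom (T.obj A)).map (T.map g) = (ihom A).map g ≫ φ A B'
  naturality_left : ∀ {A' A : C} (f : A' ⟶ A) (B : C),
    φ A B ≫ (MonoidalClosed.pre (T.map f)).app (T.obj B)
      = (MonoidalClosed.pre f).app B ≫ φ A' B
  unit : ∀ A : C, junit A ≫ φ A A = junit (T.obj A)
  comp : ∀ A B D : C,
    icomp A B D ≫ φ A D = (φ B D ⊗ₘ φ A B) ≫ icomp (T.obj A) (T.obj B) (T.obj D)
  induces : ∀ {A B : C} (f : A ⟶ B),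
    rcurry ((λ_ A).hom ≫ f) ≫ φ A B = rcurry ((λ_ (T.obj A)).hom ≫ T.map f)

/-- The enrichment family associated to a tensorial strength:
`φ_{A,B}` is adjoint to `T(ev_A) ∘ σ_{[A,B],A}`. -/
noncomputable def strengthToEnrichmentHom {T : C ⥤ C} (S : Strength T) (A B : C) :
    ((ihom A).obj B) ⟶ ((ihom (T.obj A)).obj (T.obj B)) :=
  rcurry (S.σ ((ihom A).obj B) A ≫ T.map (ev A B))

/-- The strength family associated to an enrichment family `φ`:
`σ_{X,A} = ev_{T(A)} ∘ ((φ_{A,X⊗A} ∘ γ_A) ⊗ id_{T(A)})`. -/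
noncomputable def enrichmentToStrengthHom {T : C ⥤ C}
    (φ : ∀ A B : C, ((ihom A).obj B) ⟶ ((ihom (T.obj A)).obj (T.obj B))) (X A : C) :
    X ⊗ T.obj A ⟶ T.obj (X ⊗ A) :=
  ((coev A X ≫ φ A (X ⊗ A)) ▷ T.obj A) ≫ ev (T.obj A) (T.obj (X ⊗ A))

/-- The two compatibilities of a tensorial strength with the unit and the multiplication
of a monad, which make `(T, μ, η, σ)` a strong monad in the sense of Kock. -/
def IsStrongMonadStrength (M : Monad C) (S : Strength (M : C ⥤ C)) : Prop :=
  (∀ X Y : C, (X ◁ M.η.app Y) ≫ S.σ X Y = M.η.app (X ⊗ Y)) ∧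
  (∀ X Y : C, (X ◁ M.μ.app Y) ≫ S.σ X Y
      = S.σ X ((M : C ⥤ C).obj Y) ≫ (M : C ⥤ C).map (S.σ X Y) ≫ M.μ.app (X ⊗ Y))

/-- `η` and `μ` of a monad are `E`-natural with respect to an enrichment family `φ` of its
underlying functor (for `η`, with respect to the identity enrichment of `𝟭`; for `μ`,
with respect to the composite enrichment `φ_{TA,TB} ∘ φ_{A,B}` of `T ∘ T`). -/
def IsEnrichedMonadFamily (M : Monad C)
    (φ : ∀ A B : C, ((ihom A).obj B) ⟶
      ((ihom ((M : C ⥤ C).obj A)).obj ((M : C ⥤ C).obj B))) : Prop :=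
  (∀ A B : C,
    (ihom A).map (M.η.app B)
      = φ A B ≫ (MonoidalClosed.pre (M.η.app A)).app ((M : C ⥤ C).obj B)) ∧
  (∀ A B : C,
    (φ A B ≫ φ ((M : C ⥤ C).obj A) ((M : C ⥤ C).obj B))
        ≫ (ihom ((M : C ⥤ C).obj ((M : C ⥤ C).obj A))).map (M.μ.app B)
      = φ A B ≫ (MonoidalClosed.pre (M.μ.app A)).app ((M : C ⥤ C).obj B))

section Basic

variable {X X' A A' B B' : C}

@[simp] lemma runcurry_rcurry (f : X ⊗ A ⟶ B) : runcurry (rcurry f) = f := by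
  simp [runcurry, rcurry]

@[simp] lemma rcurry_runcurry (g : X ⟶ (ihom A).obj B) : rcurry (runcurry g) = g := by
  simp [runcurry, rcurry]

lemma runcurry_injective : Function.Injective (runcurry (X := X) (A := A) (B := B)) :=
  fun g h e => by rw [← rcurry_runcurry g, e, rcurry_runcurry]

lemma runcurry_eq (g : X ⟶ (ihom A).obj B) : runcurry g = (g ▷ A) ≫ ev A B := by
  rw [runcurry, ev, uncurry_eq, ← BraidedCategory.braiding_naturality_left_assoc]

@[simp] lemma runcurry_id : runcurry (𝟙 ((ihom A).obj B)) = ev A B := by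
  simp [runcurry_eq]

lemma runcurry_comp_left (g : X ⟶ X') (k : X' ⟶ (ihom A).obj B) :
    runcurry (g ≫ k) = (g ▷ A) ≫ runcurry k := by
  simp [runcurry_eq]

lemma runcurry_comp_map (g : X ⟶ (ihom A).obj B) (h : B ⟶ B') :
    runcurry (g ≫ (ihom A).map h) = runcurry g ≫ h := by
  simp [runcurry, uncurry_natural_right]

lemma runcurry_map (h : B ⟶ B') :
    runcurry ((ihom A).map h : (ihom A).obj B ⟶ _) = ev A B ≫ h := by
  rw [← Category.id_comp ((ihom A).map h), runcurry_comp_map, runcurry_id]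

lemma runcurry_comp_pre (g : X ⟶ (ihom A).obj B) (f : A' ⟶ A) :
    runcurry (g ≫ (MonoidalClosed.pre f).app B) = (X ◁ f) ≫ runcurry g := by
  rw [runcurry, uncurry_natural_left, MonoidalClosed.uncurry_pre, runcurry, uncurry_eq]
  rw [← BraidedCategory.braiding_naturality_left_assoc]
  rw [← BraidedCategory.braiding_naturality_right_assoc]
  rw [← BraidedCategory.braiding_naturality_left_assoc g A, whisker_exchange_assoc]

lemma runcurry_pre_app (f : A' ⟶ A) :
    runcurry ((MonoidalClosed.pre f).app B) = (((ihom A).obj B) ◁ f) ≫ ev A B := by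
  rw [← Category.id_comp ((MonoidalClosed.pre f).app B), runcurry_comp_pre, runcurry_id]

@[simp] lemma runcurry_coev : runcurry (coev A X) = 𝟙 (X ⊗ A) := by
  simp [coev]

@[simp] lemma runcurry_junit : runcurry (junit A) = (λ_ A).hom := by
  simp [junit]

lemma whiskerRight_ev (g : X ⟶ (ihom A).obj B) : (g ▷ A) ≫ ev A B = runcurry g :=
  (runcurry_eq g).symm

-- coev naturality
lemma coev_natural (f : X ⟶ X') : f ≫ coev A X' = coev A X ≫ (ihom A).map (f ▷ A) := by
  apply runcurry_injective
  rw [runcurry_comp_left, runcurry_comp_map]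
  simp

lemma coev_pre (f : A ⟶ A') :
    coev A' X ≫ (MonoidalClosed.pre f).app (X ⊗ A') = coev A X ≫ (ihom A).map (X ◁ f) := by
  apply runcurry_injective
  rw [runcurry_comp_pre, runcurry_comp_map]
  simp

lemma coev_ev : coev A ((ihom A).obj B) ≫ (ihom A).map (ev A B) = 𝟙 _ := by
  apply runcurry_injective
  rw [runcurry_comp_map]
  simp

end Basic


section StrengthToEnrichment

variable {T : C ⥤ C} (S : Strength T)

lemma strength_nat_left_assoc {X X' : C} (f : X ⟶ X') (Y : C) {W : C}
    (h : T.obj (X' ⊗ Y) ⟶ W) :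
    (f ▷ T.obj Y) ≫ S.σ X' Y ≫ h = S.σ X Y ≫ T.map (f ▷ Y) ≫ h := by
  rw [← Category.assoc, S.naturality_left, Category.assoc]

lemma strength_nat_right_assoc (X : C) {Y Y' : C} (f : Y ⟶ Y') {W : C}
    (h : T.obj (X ⊗ Y') ⟶ W) :
    (X ◁ T.map f) ≫ S.σ X Y' ≫ h = S.σ X Y ≫ T.map (X ◁ f) ≫ h := by
  rw [← Category.assoc, S.naturality_right, Category.assoc]

lemma strength_assoc_assoc (X Y Z : C) {W : C} (h : T.obj (X ⊗ (Y ⊗ Z)) ⟶ W) :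
    (α_ X Y (T.obj Z)).hom ≫ (X ◁ S.σ Y Z) ≫ S.σ X (Y ⊗ Z) ≫ h
      = S.σ (X ⊗ Y) Z ≫ T.map (α_ X Y Z).hom ≫ h := by
  rw [← Category.assoc, ← Category.assoc, Category.assoc (α_ _ _ _).hom, S.assoc,
    Category.assoc]

lemma runcurry_sE (A B : C) :
    runcurry (strengthToEnrichmentHom S A B) = S.σ ((ihom A).obj B) A ≫ T.map (ev A B) := by
  simp [strengthToEnrichmentHom]

/-- The workhorse lemma. -/
lemma runcurry_comp_sE {X A B : C} (g : X ⟶ (ihom A).obj B) :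
    runcurry (g ≫ strengthToEnrichmentHom S A B) = S.σ X A ≫ T.map (runcurry g) := by
  rw [runcurry_comp_left, strengthToEnrichmentHom, runcurry_rcurry,
    ← Category.assoc, S.naturality_left, Category.assoc, ← T.map_comp, whiskerRight_ev]

lemma sigma_eq_runcurry (X A : C) :
    S.σ X A = runcurry (coev A X ≫ strengthToEnrichmentHom S A (X ⊗ A)) := by
  rw [runcurry_comp_sE, runcurry_coev, T.map_id, Category.comp_id]

noncomputable def strengthToEnrichment : Enrichment T where
  φ := strengthToEnrichmentHom S
  naturality_right A B B' g := by
    apply runcurry_injective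
    rw [runcurry_comp_map, runcurry_sE, runcurry_comp_sE, runcurry_map,
      Category.assoc, ← T.map_comp]
  naturality_left := by
    intro A' A f B
    apply runcurry_injective
    rw [runcurry_comp_pre, runcurry_comp_sE, runcurry_pre_app, runcurry_sE,
      ← Category.assoc, S.naturality_right, Category.assoc, ← T.map_comp]
  unit A := by
    apply runcurry_injective
    rw [runcurry_comp_sE, runcurry_junit, S.unit, runcurry_junit]
  comp A B D := by
    apply runcurry_injective
    rw [runcurry_comp_sE, runcurry_comp_left, icomp, runcurry_rcurry, icomp, runcurry_rcurry]
    rw [tensorHom_def (strengthToEnrichmentHom S B D)]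
    rw [comp_whiskerRight, Category.assoc]
    rw [associator_naturality_middle_assoc, ← MonoidalCategory.whiskerLeft_comp_assoc,
      whiskerRight_ev, runcurry_sE, associator_naturality_left_assoc,
      ← whisker_exchange_assoc, whiskerRight_ev, runcurry_sE,
      MonoidalCategory.whiskerLeft_comp_assoc, strength_nat_right_assoc,
      strength_assoc_assoc]
    simp [T.map_comp]
  induces := by
    intro A B f
    apply runcurry_injective
    rw [runcurry_comp_sE, runcurry_rcurry, runcurry_rcurry, T.map_comp,
      ← Category.assoc, S.unit]

end StrengthToEnrichment


section EnrichmentToStrength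

variable {T : C ⥤ C} (E : Enrichment T)

lemma eS_eq' (φ : ∀ A B : C, ((ihom A).obj B) ⟶ ((ihom (T.obj A)).obj (T.obj B))) (X A : C) :
    enrichmentToStrengthHom φ X A = runcurry (coev A X ≫ φ A (X ⊗ A)) := by
  rw [enrichmentToStrengthHom, runcurry_eq]

lemma eS_eq (X A : C) :
    enrichmentToStrengthHom E.φ X A = runcurry (coev A X ≫ E.φ A (X ⊗ A)) :=
  eS_eq' E.φ X A

lemma eq_coev_map {X A B : C} (g : X ⟶ (ihom A).obj B) :
    g = coev A X ≫ (ihom A).map (runcurry g) := by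
  apply runcurry_injective
  rw [runcurry_comp_map, runcurry_coev, Category.id_comp]

lemma coev_lambda (A : C) :
    coev A (𝟙_ C) ≫ (ihom A).map (λ_ A).hom = junit A := by
  apply runcurry_injective
  rw [runcurry_comp_map, runcurry_coev, runcurry_junit, Category.id_comp]

/-- The workhorse lemma, enrichment version. -/
lemma runcurry_comp_eφ {X A B : C} (g : X ⟶ (ihom A).obj B) :
    runcurry (g ≫ E.φ A B) = enrichmentToStrengthHom E.φ X A ≫ T.map (runcurry g) := by
  conv_lhs => rw [eq_coev_map g]
  rw [Category.assoc, ← E.naturality_right, ← Category.assoc, runcurry_comp_map, ← eS_eq]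

lemma coev_icomp (X Y Z : C) :
    (coev (Y ⊗ Z) X ⊗ₘ coev Z Y) ≫ icomp Z (Y ⊗ Z) (X ⊗ (Y ⊗ Z))
      = coev Z (X ⊗ Y) ≫ (ihom Z).map (α_ X Y Z).hom := by
  apply runcurry_injective
  rw [runcurry_comp_map, runcurry_coev, Category.id_comp, runcurry_comp_left, icomp,
    runcurry_rcurry, MonoidalCategory.tensorHom_def, comp_whiskerRight, Category.assoc,
    associator_naturality_middle_assoc, ← MonoidalCategory.whiskerLeft_comp_assoc,
    whiskerRight_ev, runcurry_coev, MonoidalCategory.whiskerLeft_id, Category.id_comp,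
    associator_naturality_left_assoc, whiskerRight_ev, runcurry_coev, Category.comp_id]

noncomputable def enrichmentToStrength : Strength T where
  σ := enrichmentToStrengthHom E.φ
  naturality_left := by
    intro X X' f Y
    rw [eS_eq, eS_eq, ← runcurry_comp_left, ← Category.assoc, coev_natural, Category.assoc,
      ← E.naturality_right, ← Category.assoc, runcurry_comp_map]
  naturality_right := by
    intro X Y Y' f
    rw [eS_eq, eS_eq, ← runcurry_comp_pre, Category.assoc, E.naturality_left,
      ← Category.assoc, coev_pre, Category.assoc, ← E.naturality_right,
      ← Category.assoc, runcurry_comp_map]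
  unit := by
    intro Y
    rw [eS_eq, ← runcurry_comp_map, Category.assoc, E.naturality_right, ← Category.assoc,
      coev_lambda, E.unit, runcurry_junit]
  assoc := by
    intro X Y Z
    rw [eS_eq E (X ⊗ Y) Z, ← runcurry_comp_map, Category.assoc, E.naturality_right,
      ← Category.assoc (coev Z (X ⊗ Y)), ← coev_icomp, Category.assoc, E.comp, runcurry_comp_left,
      runcurry_comp_left, icomp, runcurry_rcurry]
    rw [← comp_whiskerRight_assoc, tensorHom_comp_tensorHom, tensorHom_def (coev (Y ⊗ Z) X ≫ E.φ (Y ⊗ Z) (X ⊗ (Y ⊗ Z)))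
        (coev Z Y ≫ E.φ Z (Y ⊗ Z)), comp_whiskerRight, Category.assoc,
      associator_naturality_middle_assoc, ← MonoidalCategory.whiskerLeft_comp_assoc,
      whiskerRight_ev, ← eS_eq, associator_naturality_left_assoc,
      ← whisker_exchange_assoc, whiskerRight_ev, ← eS_eq]



lemma strengthToEnrichmentHom_enrichmentToStrength (A B : C) :
    strengthToEnrichmentHom (enrichmentToStrength E) A B = E.φ A B := by
  apply runcurry_injective
  rw [runcurry_sE]
  show enrichmentToStrengthHom E.φ _ A ≫ T.map (ev A B) = _
  calc enrichmentToStrengthHom E.φ _ A ≫ T.map (ev A B)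
      = enrichmentToStrengthHom E.φ _ A ≫ T.map (runcurry (𝟙 ((ihom A).obj B))) := by
        rw [runcurry_id]
    _ = runcurry (𝟙 ((ihom A).obj B) ≫ E.φ A B) := (runcurry_comp_eφ E _).symm
    _ = runcurry (E.φ A B) := by rw [Category.id_comp]

end EnrichmentToStrength

section Roundtrips

variable {T : C ⥤ C}

lemma enrichmentToStrengthHom_strengthToEnrichmentHom (S : Strength T) (X A : C) :
    enrichmentToStrengthHom (strengthToEnrichmentHom S) X A = S.σ X A := by
  rw [eS_eq', ← sigma_eq_runcurry]

lemma Strength.ext' {S S' : Strength T} (h : S.σ = S'.σ) : S = S' := by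
  cases S; cases S'
  simp only at h
  subst h
  rfl

lemma Enrichment.ext' {E E' : Enrichment T} (h : E.φ = E'.φ) : E = E' := by
  cases E; cases E'
  simp only at h
  subst h
  rfl

end Roundtrips

section MonadPart

variable (M : Monad C) (S : Strength (M : C ⥤ C))

lemma part_eta :
    (∀ X Y : C, (X ◁ M.η.app Y) ≫ S.σ X Y = M.η.app (X ⊗ Y)) ↔
    (∀ A B : C, (ihom A).map (M.η.app B)
      = strengthToEnrichmentHom S A B
          ≫ (MonoidalClosed.pre (M.η.app A)).app ((M : C ⥤ C).obj B)) := by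
  constructor
  · intro h A B
    apply runcurry_injective
    simp only [Functor.id_obj]
    rw [runcurry_map, runcurry_comp_pre, runcurry_sE, ← Category.assoc, h,
      ← M.η.naturality (ev A B)]
    rfl
  · intro h X Y
    simp only [Functor.id_obj] at h
    rw [sigma_eq_runcurry S X Y, ← runcurry_comp_pre, Category.assoc, ← h]
    simp only [Functor.id_obj]
    rw [runcurry_comp_map, runcurry_coev, Category.id_comp]

lemma part_mu :
    (∀ X Y : C, (X ◁ M.μ.app Y) ≫ S.σ X Y
      = S.σ X ((M : C ⥤ C).obj Y) ≫ (M : C ⥤ C).map (S.σ X Y) ≫ M.μ.app (X ⊗ Y)) ↔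
    (∀ A B : C,
      (strengthToEnrichmentHom S A B
          ≫ strengthToEnrichmentHom S ((M : C ⥤ C).obj A) ((M : C ⥤ C).obj B))
        ≫ (ihom ((M : C ⥤ C).obj ((M : C ⥤ C).obj A))).map (M.μ.app B)
      = strengthToEnrichmentHom S A B
          ≫ (MonoidalClosed.pre (M.μ.app A)).app ((M : C ⥤ C).obj B)) := by
  constructor
  · intro h A B
    apply runcurry_injective
    simp only [Functor.comp_obj]
    rw [runcurry_comp_map, runcurry_comp_sE, runcurry_sE, runcurry_comp_pre, runcurry_sE]
    conv_rhs => rw [← Category.assoc, h]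
    have hn := M.μ.naturality (ev A B)
    simp only [Functor.comp_map, Functor.comp_obj] at hn
    rw [Functor.map_comp]
    simp only [Category.assoc]
    rw [hn]
  · intro h X Y
    simp only [Functor.comp_obj] at h
    rw [sigma_eq_runcurry S X Y, ← runcurry_comp_pre, Category.assoc, ← h]
    simp only [Functor.comp_obj]
    conv_lhs => rw [← Category.assoc, ← Category.assoc, runcurry_comp_map, runcurry_comp_sE]
    rw [Category.assoc, ← sigma_eq_runcurry]

theorem part1 : IsStrongMonadStrength M S ↔ IsEnrichedMonadFamily M (strengthToEnrichmentHom S) :=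
  and_congr (part_eta M S) (part_mu M S)

end MonadPart

/-- Let `(T, μ, η)` be a monad on a closed symmetric monoidal category and
`σ` a tensorial strength for its underlying functor, with corresponding enrichment `φ`.
Then `(T, μ, η, σ)` is a strong monad if and only if `η` and `μ` are `E`-natural with
respect to `φ` (and the induced composite enrichment of `T ∘ T`).  Consequently,
extensions of the monad to a strong monad correspond bijectively to extensions to an
`E`-enriched monad. -/
theorem strongMonad_iff_enrichedMonad (M : Monad C) :
    (∀ S : Strength (M : C ⥤ C),
      IsStrongMonadStrength M S ↔ IsEnrichedMonadFamily M (strengthToEnrichmentHom S)) ∧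
    ∃ e : { S : Strength (M : C ⥤ C) // IsStrongMonadStrength M S } ≃
          { E : Enrichment (M : C ⥤ C) // IsEnrichedMonadFamily M E.φ },
      ∀ (S : { S : Strength (M : C ⥤ C) // IsStrongMonadStrength M S }) (A B : C),
        ((e S) : Enrichment (M : C ⥤ C)).φ A B = strengthToEnrichmentHom S.1 A B := by
  refine ⟨part1 M, ?_⟩
  have hres : ∀ E : Enrichment (M : C ⥤ C),
      strengthToEnrichmentHom (enrichmentToStrength E) = E.φ := fun E => by
    funext A B; exact strengthToEnrichmentHom_enrichmentToStrength E A B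
  refine ⟨{
    toFun := fun S => ⟨strengthToEnrichment S.1, (part1 M S.1).mp S.2⟩
    invFun := fun E => ⟨enrichmentToStrength E.1,
      (part1 M _).mpr (by rw [hres E.1]; exact E.2)⟩
    left_inv := fun S => by
      apply Subtype.ext
      apply Strength.ext'
      funext X A
      exact enrichmentToStrengthHom_strengthToEnrichmentHom S.1 X A
    right_inv := fun E => by
      apply Subtype.ext
      apply Enrichment.ext'
      exact hres E.1 }, fun S A B => rfl⟩


end PaperMorita
end

section
/- Let E be a closed symmetric monoidal category with braiding β and (T, μ, η, σ) a strong monad on E, and define the dual strength σ'_{A,X} := T(β_{X,A}) ∘ σ_{X,A} ∘ β_{T(A),X} : T(A) ⊗ X ⟶ T(A ⊗ X). For a T-algebra (Y, ξ) and an object A of E, let ξ^A : T([A,Y]) ⟶ [A,Y] be the morphism adjoint to the composite ξ ∘ T(ev_A) ∘ σ'_{[A,Y],A} : T([A,Y]) ⊗ A ⟶ T([A,Y] ⊗ A) ⟶ T(Y) ⟶ Y. Then ([A,Y], ξ^A) is a T-algebra. -/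
open CategoryTheory MonoidalCategory MonoidalClosed Limits

universe v u

namespace PaperMorita

variable {C : Type u} [Category.{v} C] [MonoidalCategory C] [SymmetricCategory C]
  [MonoidalClosed C]

/-- The dual tensorial strength `σ'_{B,X} : T(B) ⊗ X ⟶ T(B ⊗ X)` obtained from a
tensorial strength via the braiding: `σ'_{B,X} = T(β_{X,B}) ∘ σ_{X,B} ∘ β_{T(B),X}`. -/
noncomputable def dualStrength {T : C ⥤ C} (S : Strength T) (B X : C) :
    T.obj B ⊗ X ⟶ T.obj (B ⊗ X) :=
  (β_ (T.obj B) X).hom ≫ S.σ X B ≫ T.map (β_ X B).hom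

/-- For a `T`-algebra `(Y, ξ)` and an object `A`, the cotensor structure morphism
`ξ^A : T([A,Y]) ⟶ [A,Y]`, adjoint to `ξ ∘ T(ev_A) ∘ σ'_{[A,Y],A}`. -/
noncomputable def cotensorStructMap (M : Monad C) (S : Strength (M : C ⥤ C))
    (Y : M.Algebra) (A : C) :
    (M : C ⥤ C).obj ((ihom A).obj Y.A) ⟶ (ihom A).obj Y.A :=
  rcurry (dualStrength S ((ihom A).obj Y.A) A ≫ (M : C ⥤ C).map (ev A Y.A) ≫ Y.a)

lemma comp_rcurry {X' X A B : C} (g : X' ⟶ X) (f : X ⊗ A ⟶ B) :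
    g ≫ rcurry f = rcurry ((g ▷ A) ≫ f) := by
  rw [rcurry, rcurry, ← MonoidalClosed.curry_natural_left]
  congr 1
  rw [← BraidedCategory.braiding_naturality_right_assoc]

lemma rcurry_whisker_ev {X A B : C} (f : X ⊗ A ⟶ B) :
    (rcurry f ▷ A) ≫ ev A B = f := by
  rw [rcurry, ev, BraidedCategory.braiding_naturality_left_assoc]
  have : (A ◁ MonoidalClosed.curry ((β_ A X).hom ≫ f)) ≫ (ihom.ev A).app B
      = MonoidalClosed.uncurry (MonoidalClosed.curry ((β_ A X).hom ≫ f)) := by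
    rw [MonoidalClosed.uncurry_eq]
  rw [this, MonoidalClosed.uncurry_curry, SymmetricCategory.symmetry_assoc]

lemma rcurry_ev (A B : C) : rcurry (ev A B) = 𝟙 ((ihom A).obj B) := by
  rw [rcurry, ev, SymmetricCategory.symmetry_assoc, ← MonoidalClosed.uncurry_id_eq_ev,
    MonoidalClosed.curry_uncurry]

set_option linter.unusedSectionVars false in
lemma dualStrength_natural_left {T : C ⥤ C} (S : Strength T) {B B' : C} (f : B ⟶ B') (X : C) :
    (T.map f ▷ X) ≫ dualStrength S B' X = dualStrength S B X ≫ T.map (f ▷ X) := by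
  rw [dualStrength, dualStrength, BraidedCategory.braiding_naturality_left_assoc,
    reassoc_of% (S.naturality_right X f), Category.assoc, Category.assoc, ← T.map_comp, ← T.map_comp,
    BraidedCategory.braiding_naturality_right]

/-- Let `(T, μ, η, σ)` be a strong monad on a closed symmetric monoidal
category, `(Y, ξ)` a `T`-algebra and `A` an object.  Then `([A,Y], ξ^A)`, where `ξ^A` is
adjoint to `ξ ∘ T(ev_A) ∘ σ'_{[A,Y],A}`, is a `T`-algebra. -/
theorem cotensor_is_algebra (M : Monad C) (S : Strength (M : C ⥤ C))
    (hS : IsStrongMonadStrength M S) (Y : M.Algebra) (A : C) :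
    M.η.app ((ihom A).obj Y.A) ≫ cotensorStructMap M S Y A = 𝟙 ((ihom A).obj Y.A) ∧
    M.μ.app ((ihom A).obj Y.A) ≫ cotensorStructMap M S Y A
      = (M : C ⥤ C).map (cotensorStructMap M S Y A) ≫ cotensorStructMap M S Y A := by
  set h : (M : C ⥤ C).obj ((ihom A).obj Y.A) ⊗ A ⟶ Y.A :=
    dualStrength S ((ihom A).obj Y.A) A ≫ (M : C ⥤ C).map (ev A Y.A) ≫ Y.a with hh
  have hcot : cotensorStructMap M S Y A = rcurry h := rfl
  constructor
  · rw [hcot, comp_rcurry, ← rcurry_ev A Y.A]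
    congr 1
    rw [hh, dualStrength]
    simp only [Category.assoc]
    rw [BraidedCategory.braiding_naturality_left_assoc,
      reassoc_of% (hS.1 A ((ihom A).obj Y.A))]
    rw [← M.η.naturality_assoc (β_ A ((ihom A).obj Y.A)).hom, ← M.η.naturality_assoc (ev A Y.A)]
    simp only [Functor.id_obj, Functor.id_map, Category.assoc, Y.unit, Category.comp_id,
      SymmetricCategory.symmetry_assoc]
  · rw [hcot, comp_rcurry, comp_rcurry]
    congr 1
    -- RHS: ((M : C ⥤ C).map (rcurry h) ▷ A) ≫ h = dualStrength S ((M : C ⥤ C).obj ((ihom A).obj Y.A)) A ≫ (M : C ⥤ C).map h ≫ Y.a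
    have hR : ((M : C ⥤ C).map (rcurry h) ▷ A) ≫ h
        = dualStrength S ((M : C ⥤ C).obj ((ihom A).obj Y.A)) A ≫ (M : C ⥤ C).map h ≫ Y.a := by
      rw [hh, reassoc_of% (dualStrength_natural_left S (rcurry h) A), ← (M : C ⥤ C).map_comp_assoc,
        rcurry_whisker_ev, (M : C ⥤ C).map_comp, (M : C ⥤ C).map_comp, Category.assoc]
    rw [hR, hh, dualStrength, dualStrength]
    simp only [Category.assoc]
    rw [BraidedCategory.braiding_naturality_left_assoc,
      reassoc_of% (hS.2 A ((ihom A).obj Y.A))]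
    rw [← M.μ.naturality_assoc (β_ A ((ihom A).obj Y.A)).hom, ← M.μ.naturality_assoc (ev A Y.A),
      Y.assoc]
    simp only [Functor.comp_obj, Functor.comp_map, Functor.map_comp, Category.assoc]
    rw [← Functor.map_comp_assoc M.toFunctor (β_ A (M.obj ((ihom A).obj Y.A))).hom
        (β_ (M.obj ((ihom A).obj Y.A)) A).hom,
      SymmetricCategory.symmetry, CategoryTheory.Functor.map_id, Category.id_comp]

end PaperMorita
end
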